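/- arXiv:1007.3880 — 3 statements merged into one kernel-verified Lean document; each statement's English description precedes it below -/
import Mathlib

section
/- Let t_0 := 0 ≤ t_1 < … < t_n ≤ 1 satisfy max_{1≤i≤n}(t_i − t_{i−1}) ≤ c_0/n and 1 − t_n ≤ c_0/n for a constant c_0 ≥ 1, let μ: [0,1] → ℝ and K: ℝ → ℝ be continuously differentiable with K supported in [−1,1], and let b > 0. Then for every t ∈ [0,1], | ∫_0^1 μ(s) (1/b) K((t − s)/b) ds − Σ_{i=1}^n (t_i − t_{i−1}) μ(t_i) (1/b) K((t − t_i)/b) | ≤ (c_0/n) · ( ‖μ‖_∞ ‖K′‖_∞ / b² + ‖μ′‖_∞ ‖K‖_∞ / b + ‖μ‖_∞ ‖K‖_∞ / b ), where ‖·‖_∞ denotes the supremum norm (of μ and μ′ over [0,1], of K and K′ over ℝ). Consequently, in the regression model Y_i = μ(t_i) + ε_i with independent mean-zero errors, E[μ̂_n(t)] = ∫_0^1 μ(s)(1/b)K((t−s)/b) ds + O(1/(n b²)) uniformly in t ∈ [0,1], where μ̂_n(t) = Σ_{i=1}^n (t_i − t_{i−1})(1/b)K((t − t_i)/b)Y_i.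 -/
open MeasureTheory ProbabilityTheory Filter

noncomputable section

/-- The Priestley–Chao estimator. -/
def pcEst (n : ℕ) (t : ℕ → ℝ) (b : ℝ) (K : ℝ → ℝ) (Y : ℕ → ℝ) (s : ℝ) : ℝ :=
  ∑ i ∈ Finset.Icc 1 n, (t i - t (i - 1)) * (1 / b) * K ((s - t i) / b) * Y i

lemma sum_Icc_one_eq_sum_range (n : ℕ) (F : ℕ → ℝ) :
    ∑ i ∈ Finset.Icc 1 n, F i = ∑ i ∈ Finset.range n, F (i + 1) := by
  induction n with
  | zero => simp
  | succ n ih =>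
    rw [Finset.sum_Icc_succ_top (by omega : 1 ≤ n + 1), ih, Finset.sum_range_succ]

lemma abs_mul3_le {a b c A C : ℝ} (ha : |a| ≤ A) (hc : |c| ≤ C) (hb : 0 ≤ b) (hA : 0 ≤ A) :
    |a * b * c| ≤ A * b * C := by
  rw [abs_mul, abs_mul, abs_of_nonneg hb]
  exact mul_le_mul (mul_le_mul ha le_rfl hb hA) hc (abs_nonneg _) (mul_nonneg hA hb)

theorem statement7
    {Ω : Type*} [MeasurableSpace Ω] (P : Measure Ω) [IsProbabilityMeasure P]
    (n : ℕ) (hn : 1 ≤ n) (c0 : ℝ) (hc0 : 1 ≤ c0)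
    (t : ℕ → ℝ) (ht0 : t 0 = 0) (ht1 : 0 ≤ t 1) (htn : t n ≤ 1)
    (hmono : ∀ i, 1 ≤ i → i < n → t i < t (i + 1))
    (hgap : ∀ i, 1 ≤ i → i ≤ n → t i - t (i - 1) ≤ c0 / n)
    (hlast : 1 - t n ≤ c0 / n)
    (μ : ℝ → ℝ) (hμ : ContDiffOn ℝ 1 μ (Set.Icc 0 1))
    (K : ℝ → ℝ) (hK : ContDiff ℝ 1 K)
    (hKsupp : ∀ u, u ∉ Set.Icc (-1 : ℝ) 1 → K u = 0)
    (b : ℝ) (hb : 0 < b)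
    (e : ℕ → Ω → ℝ) (hmeas : ∀ i, Measurable (e i))
    (hindep : iIndepFun
      (fun i : (Finset.Icc 1 n : Finset ℕ) => e i) P)
    (hint : ∀ i ∈ Finset.Icc 1 n, Integrable (e i) P)
    (hmean : ∀ i ∈ Finset.Icc 1 n, (∫ ω, e i ω ∂P) = 0)
    (Y : ℕ → Ω → ℝ) (hY : ∀ i ω, Y i ω = μ (t i) + e i ω) :
    (∀ s ∈ Set.Icc (0 : ℝ) 1,
      |(∫ u in (0 : ℝ)..1, μ u * (1 / b) * K ((s - u) / b))
        - ∑ i ∈ Finset.Icc 1 n, (t i - t (i - 1)) * (1 / b) * K ((s - t i) / b) * μ (t i)|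
      ≤ (c0 / n) *
        ((⨆ u : (Set.Icc (0 : ℝ) 1 : Set ℝ), |μ u|) * (⨆ u : ℝ, |deriv K u|) / b ^ 2
          + (⨆ u : (Set.Icc (0 : ℝ) 1 : Set ℝ), |derivWithin μ (Set.Icc 0 1) u|)
              * (⨆ u : ℝ, |K u|) / b
          + (⨆ u : (Set.Icc (0 : ℝ) 1 : Set ℝ), |μ u|) * (⨆ u : ℝ, |K u|) / b))
    ∧
    (∀ s ∈ Set.Icc (0 : ℝ) 1,
      |(∫ ω, pcEst n t b K (fun i => Y i ω) s ∂P)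
        - ∫ u in (0 : ℝ)..1, μ u * (1 / b) * K ((s - u) / b)|
      ≤ (c0 / n) *
        ((⨆ u : (Set.Icc (0 : ℝ) 1 : Set ℝ), |μ u|) * (⨆ u : ℝ, |deriv K u|) / b ^ 2
          + (⨆ u : (Set.Icc (0 : ℝ) 1 : Set ℝ), |derivWithin μ (Set.Icc 0 1) u|)
              * (⨆ u : ℝ, |K u|) / b
          + (⨆ u : (Set.Icc (0 : ℝ) 1 : Set ℝ), |μ u|) * (⨆ u : ℝ, |K u|) / b)) := by
  -- basic positivity
  have hn' : (0:ℝ) < n := by exact_mod_cast hn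
  have hc0n : (0:ℝ) < c0 / n := div_pos (by linarith) hn'
  -- monotonicity of the design points
  have hmono' : ∀ j, j ≤ n → ∀ i, i ≤ j → t i ≤ t j := by
    intro j
    induction j with
    | zero =>
      intro _ i hi
      interval_cases i
      exact le_rfl
    | succ j ih =>
      intro hj i hi
      rcases eq_or_lt_of_le hi with rfl | hlt
      · exact le_rfl
      · have hij : i ≤ j := Nat.lt_succ_iff.mp hlt
        have h1 : t i ≤ t j := ih (le_trans (Nat.le_succ j) hj) i hij
        have h2 : t j ≤ t (j + 1) := by
          rcases Nat.eq_zero_or_pos j with rfl | hjpos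
          · rw [ht0]; exact ht1
          · exact le_of_lt (hmono j hjpos (by omega))
        linarith
  have htmem : ∀ i, i ≤ n → t i ∈ Set.Icc (0:ℝ) 1 := by
    intro i hi
    constructor
    · have := hmono' i hi 0 (Nat.zero_le i); rw [ht0] at this; exact this
    · exact le_trans (hmono' n le_rfl i hi) htn
  -- continuity facts
  have hμc : ContinuousOn μ (Set.Icc 0 1) := hμ.continuousOn
  have hμ'c : ContinuousOn (derivWithin μ (Set.Icc 0 1)) (Set.Icc 0 1) :=
    hμ.continuousOn_derivWithin (uniqueDiffOn_Icc zero_lt_one) le_rfl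
  have hKc : Continuous K := hK.continuous
  have hK'c : Continuous (deriv K) := hK.continuous_deriv le_rfl
  -- deriv K vanishes off [-1,1]
  have hK'supp : ∀ u, u ∉ Set.Icc (-1:ℝ) 1 → deriv K u = 0 := by
    intro u hu
    have hopen : IsOpen (Set.Icc (-1:ℝ) 1)ᶜ := isClosed_Icc.isOpen_compl
    have hev : K =ᶠ[nhds u] fun _ => 0 := by
      filter_upwards [hopen.mem_nhds hu] with v hv using hKsupp v hv
    rw [hev.deriv_eq]; simp
  -- bounds on sups
  have hMμbdd : BddAbove (Set.range fun u : (Set.Icc (0:ℝ) 1 : Set ℝ) => |μ u|) := by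
    rw [show (fun u : (Set.Icc (0:ℝ) 1 : Set ℝ) => |μ u|)
        = (Set.Icc (0:ℝ) 1).domRestrict (fun u => |μ u|) from rfl, Set.range_restrict]
    exact (isCompact_Icc.image_of_continuousOn hμc.abs).bddAbove
  have hMμ'bdd : BddAbove (Set.range fun u : (Set.Icc (0:ℝ) 1 : Set ℝ) =>
      |derivWithin μ (Set.Icc 0 1) u|) := by
    rw [show (fun u : (Set.Icc (0:ℝ) 1 : Set ℝ) => |derivWithin μ (Set.Icc 0 1) u|)
        = (Set.Icc (0:ℝ) 1).domRestrict (fun u => |derivWithin μ (Set.Icc 0 1) u|) from rfl,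
      Set.range_restrict]
    exact (isCompact_Icc.image_of_continuousOn hμ'c.abs).bddAbove
  have hKglobal : ∀ (g : ℝ → ℝ), Continuous g → (∀ u, u ∉ Set.Icc (-1:ℝ) 1 → g u = 0) →
      BddAbove (Set.range fun u : ℝ => |g u|) := by
    intro g hg hgs
    obtain ⟨C, hC⟩ := isCompact_Icc.exists_bound_of_continuousOn (hg.continuousOn
      (s := Set.Icc (-1:ℝ) 1))
    refine ⟨max C 0, ?_⟩
    rintro x ⟨u, rfl⟩
    by_cases hu : u ∈ Set.Icc (-1:ℝ) 1
    · exact le_trans (hC u hu) (le_max_left _ _)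
    · simp only [hgs u hu, abs_zero]; exact le_max_right _ _
  have hMKbdd : BddAbove (Set.range fun u : ℝ => |K u|) := hKglobal K hKc hKsupp
  have hMK'bdd : BddAbove (Set.range fun u : ℝ => |deriv K u|) := hKglobal _ hK'c hK'supp
  set M1 := ⨆ u : (Set.Icc (0:ℝ) 1 : Set ℝ), |μ u| with hM1def
  set M2 := ⨆ u : ℝ, |deriv K u| with hM2def
  set M3 := ⨆ u : (Set.Icc (0:ℝ) 1 : Set ℝ), |derivWithin μ (Set.Icc 0 1) u| with hM3def
  set M4 := ⨆ u : ℝ, |K u| with hM4def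
  have hμle : ∀ u ∈ Set.Icc (0:ℝ) 1, |μ u| ≤ M1 := fun u hu => le_ciSup hMμbdd ⟨u, hu⟩
  have hμ'le : ∀ u ∈ Set.Icc (0:ℝ) 1, |derivWithin μ (Set.Icc 0 1) u| ≤ M3 :=
    fun u hu => le_ciSup hMμ'bdd ⟨u, hu⟩
  have hKle : ∀ u : ℝ, |K u| ≤ M4 := fun u => le_ciSup hMKbdd u
  have hK'le : ∀ u : ℝ, |deriv K u| ≤ M2 := fun u => le_ciSup hMK'bdd u
  have hM1 : 0 ≤ M1 := le_trans (abs_nonneg _) (hμle 0 ⟨le_rfl, zero_le_one⟩)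
  have hM2 : 0 ≤ M2 := le_trans (abs_nonneg _) (hK'le 0)
  have hM3 : 0 ≤ M3 := le_trans (abs_nonneg _) (hμ'le 0 ⟨le_rfl, zero_le_one⟩)
  have hM4 : 0 ≤ M4 := le_trans (abs_nonneg _) (hKle 0)
  -- Part 1
  have part1 : ∀ s ∈ Set.Icc (0 : ℝ) 1,
      |(∫ u in (0 : ℝ)..1, μ u * (1 / b) * K ((s - u) / b))
        - ∑ i ∈ Finset.Icc 1 n, (t i - t (i - 1)) * (1 / b) * K ((s - t i) / b) * μ (t i)|
      ≤ (c0 / n) * (M1 * M2 / b ^ 2 + M3 * M4 / b + M1 * M4 / b) := by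
    intro s _hs
    set f : ℝ → ℝ := fun u => μ u * (1 / b) * K ((s - u) / b) with hfdef
    set L : ℝ := M1 * M2 / b ^ 2 + M3 * M4 / b with hLdef
    set B : ℝ := M1 * M4 / b with hBdef
    have hL : 0 ≤ L := by positivity
    have hB : 0 ≤ B := by positivity
    have hKg : Continuous (fun u : ℝ => K ((s - u) / b)) :=
      hKc.comp ((continuous_const.sub continuous_id).div_const b)
    have hfc : ContinuousOn f (Set.Icc 0 1) :=
      (hμc.mul continuousOn_const).mul hKg.continuousOn
    have hfb : ∀ u ∈ Set.Icc (0:ℝ) 1, |f u| ≤ B := by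
      intro u hu
      have h := abs_mul3_le (hμle u hu) (hKle ((s - u) / b))
        (le_of_lt (by positivity : (0:ℝ) < 1 / b)) hM1
      calc |f u| ≤ M1 * (1 / b) * M4 := h
        _ = B := by rw [hBdef]; ring
    -- derivative of f on [0,1]
    set f' : ℝ → ℝ := fun u => derivWithin μ (Set.Icc 0 1) u * (1 / b) * K ((s - u) / b)
        + μ u * (1 / b) * (deriv K ((s - u) / b) * (-(1 / b))) with hf'def
    have hder : ∀ u ∈ Set.Icc (0:ℝ) 1, HasDerivWithinAt f (f' u) (Set.Icc 0 1) u := by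
      intro u hu
      have h1 : HasDerivWithinAt (fun v => μ v * (1 / b))
          (derivWithin μ (Set.Icc 0 1) u * (1 / b)) (Set.Icc 0 1) u :=
        ((hμ.differentiableOn one_ne_zero u hu).hasDerivWithinAt).mul_const _
      have hg : HasDerivAt (fun v : ℝ => (s - v) / b) (-(1 / b)) u := by
        have := ((hasDerivAt_id u).const_sub s).div_const b
        simpa [neg_div] using this
      have h2 : HasDerivAt (fun v : ℝ => K ((s - v) / b))
          (deriv K ((s - u) / b) * (-(1 / b))) u :=
        ((hK.differentiable one_ne_zero _).hasDerivAt).comp u hg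
      exact h1.mul h2.hasDerivWithinAt
    have hf'b : ∀ u ∈ Set.Icc (0:ℝ) 1, ‖f' u‖ ≤ L := by
      intro u hu
      rw [Real.norm_eq_abs]
      have e1 : |derivWithin μ (Set.Icc 0 1) u * (1 / b) * K ((s - u) / b)|
          ≤ M3 * (1 / b) * M4 :=
        abs_mul3_le (hμ'le u hu) (hKle _) (le_of_lt (by positivity)) hM3
      have hinner : |deriv K ((s - u) / b) * (-(1 / b))| ≤ M2 * (1 / b) := by
        rw [abs_mul, abs_neg, abs_of_pos (by positivity : (0:ℝ) < 1 / b)]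
        exact mul_le_mul_of_nonneg_right (hK'le _) (le_of_lt (by positivity))
      have e2 : |μ u * (1 / b) * (deriv K ((s - u) / b) * (-(1 / b)))|
          ≤ M1 * (1 / b) * (M2 * (1 / b)) :=
        abs_mul3_le (hμle u hu) hinner (le_of_lt (by positivity)) hM1
      calc |f' u| ≤ |derivWithin μ (Set.Icc 0 1) u * (1 / b) * K ((s - u) / b)|
            + |μ u * (1 / b) * (deriv K ((s - u) / b) * (-(1 / b)))| := abs_add_le _ _
        _ ≤ M3 * (1 / b) * M4 + M1 * (1 / b) * (M2 * (1 / b)) := add_le_add e1 e2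
        _ = L := by rw [hLdef]; field_simp; ring
    have hlip : ∀ x ∈ Set.Icc (0:ℝ) 1, ∀ y ∈ Set.Icc (0:ℝ) 1, |f y - f x| ≤ L * |y - x| := by
      intro x hx y hy
      have := Convex.norm_image_sub_le_of_norm_hasDerivWithin_le hder hf'b (convex_Icc 0 1) hx hy
      simpa [Real.norm_eq_abs] using this
    have hfint : ∀ a c : ℝ, a ∈ Set.Icc (0:ℝ) 1 → c ∈ Set.Icc (0:ℝ) 1 →
        IntervalIntegrable f volume a c := fun a c ha hc =>
      (hfc.mono (Set.uIcc_subset_Icc ha hc)).intervalIntegrable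
    -- per-interval estimate
    have hstep : ∀ i, i < n →
        |(∫ u in t i..t (i + 1), f u) - (t (i + 1) - t i) * f (t (i + 1))|
          ≤ (t (i + 1) - t i) * (L * (c0 / n)) := by
      intro i hi
      have hma : t i ∈ Set.Icc (0:ℝ) 1 := htmem i (le_of_lt hi)
      have hmc : t (i + 1) ∈ Set.Icc (0:ℝ) 1 := htmem (i + 1) hi
      have hac : t i ≤ t (i + 1) := hmono' (i + 1) hi i (Nat.le_succ i)
      have hgapi : t (i + 1) - t i ≤ c0 / n := by
        have := hgap (i + 1) (by omega) hi
        simpa using this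
      have h1 : (∫ u in t i..t (i + 1), f u) - (t (i + 1) - t i) * f (t (i + 1))
          = ∫ u in t i..t (i + 1), (f u - f (t (i + 1))) := by
        rw [intervalIntegral.integral_sub (hfint _ _ hma hmc) intervalIntegrable_const,
          intervalIntegral.integral_const, smul_eq_mul]
      rw [h1]
      have hbound : ∀ u ∈ Set.uIoc (t i) (t (i + 1)), ‖f u - f (t (i + 1))‖ ≤ L * (c0 / n) := by
        intro u hu
        rw [Set.uIoc_of_le hac] at hu
        have hu01 : u ∈ Set.Icc (0:ℝ) 1 :=
          ⟨le_trans hma.1 (le_of_lt hu.1), le_trans hu.2 hmc.2⟩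
        rw [Real.norm_eq_abs]
        calc |f u - f (t (i + 1))| ≤ L * |u - t (i + 1)| := hlip _ hmc _ hu01
          _ ≤ L * (c0 / n) := by
              apply mul_le_mul_of_nonneg_left _ hL
              rw [abs_sub_comm, abs_of_nonneg (by linarith [hu.2])]
              linarith [hu.1]
      have := intervalIntegral.norm_integral_le_of_norm_le_const hbound
      rw [Real.norm_eq_abs] at this
      calc |∫ u in t i..t (i + 1), (f u - f (t (i + 1)))|
          ≤ L * (c0 / n) * |t (i + 1) - t i| := this
        _ = (t (i + 1) - t i) * (L * (c0 / n)) := by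
            rw [abs_of_nonneg (by linarith)]; ring
    -- tail estimate
    have htail : |∫ u in t n..1, f u| ≤ (c0 / n) * B := by
      have hmn : t n ∈ Set.Icc (0:ℝ) 1 := htmem n le_rfl
      have hbound : ∀ u ∈ Set.uIoc (t n) 1, ‖f u‖ ≤ B := by
        intro u hu
        rw [Set.uIoc_of_le htn] at hu
        exact (Real.norm_eq_abs _) ▸ hfb u ⟨le_trans hmn.1 (le_of_lt hu.1), hu.2⟩
      have := intervalIntegral.norm_integral_le_of_norm_le_const hbound
      rw [Real.norm_eq_abs] at this
      calc |∫ u in t n..1, f u| ≤ B * |1 - t n| := this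
        _ = B * (1 - t n) := by rw [abs_of_nonneg (by linarith)]
        _ ≤ B * (c0 / n) := mul_le_mul_of_nonneg_left hlast hB
        _ = (c0 / n) * B := mul_comm _ _
    -- decomposition of the integral
    have hadj : ∀ k, k < n → IntervalIntegrable f volume (t k) (t (k + 1)) :=
      fun k hk => hfint _ _ (htmem k (le_of_lt hk)) (htmem (k + 1) hk)
    have hdecomp : (∫ u in (0:ℝ)..1, f u)
        = (∑ i ∈ Finset.range n, ∫ u in t i..t (i + 1), f u) + ∫ u in t n..1, f u := by
      have h1 : (∑ i ∈ Finset.range n, ∫ u in t i..t (i + 1), f u)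
          = ∫ u in (t 0)..(t n), f u :=
        intervalIntegral.sum_integral_adjacent_intervals hadj
      rw [h1, ht0]
      rw [← intervalIntegral.integral_add_adjacent_intervals
        (hfint 0 (t n) ⟨le_rfl, zero_le_one⟩ (htmem n le_rfl))
        (hfint (t n) 1 (htmem n le_rfl) ⟨zero_le_one, le_rfl⟩)]
    -- reindexing the sum
    have hsum : ∑ i ∈ Finset.Icc 1 n, (t i - t (i - 1)) * (1 / b) * K ((s - t i) / b) * μ (t i)
        = ∑ i ∈ Finset.range n, (t (i + 1) - t i) * f (t (i + 1)) := by
      rw [sum_Icc_one_eq_sum_range]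
      apply Finset.sum_congr rfl
      intro i _
      have h : i + 1 - 1 = i := by omega
      rw [h, hfdef]
      ring
    have htel : ∑ i ∈ Finset.range n, (t (i + 1) - t i) = t n := by
      rw [Finset.sum_range_sub t, ht0, sub_zero]
    -- assemble
    have heq : (∫ u in (0:ℝ)..1, f u)
          - (∑ i ∈ Finset.Icc 1 n, (t i - t (i - 1)) * (1 / b) * K ((s - t i) / b) * μ (t i))
        = (∑ i ∈ Finset.range n,
            ((∫ u in t i..t (i + 1), f u) - (t (i + 1) - t i) * f (t (i + 1))))
          + ∫ u in t n..1, f u := by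
      rw [hdecomp, hsum, Finset.sum_sub_distrib]
      ring
    calc |(∫ u in (0:ℝ)..1, f u)
          - ∑ i ∈ Finset.Icc 1 n, (t i - t (i - 1)) * (1 / b) * K ((s - t i) / b) * μ (t i)|
        = |(∑ i ∈ Finset.range n,
            ((∫ u in t i..t (i + 1), f u) - (t (i + 1) - t i) * f (t (i + 1))))
          + ∫ u in t n..1, f u| := by rw [heq]
      _ ≤ |∑ i ∈ Finset.range n,
            ((∫ u in t i..t (i + 1), f u) - (t (i + 1) - t i) * f (t (i + 1)))|
          + |∫ u in t n..1, f u| := abs_add_le _ _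
      _ ≤ (∑ i ∈ Finset.range n, (t (i + 1) - t i) * (L * (c0 / n))) + (c0 / n) * B := by
          refine add_le_add (le_trans (Finset.abs_sum_le_sum_abs _ _)
            (Finset.sum_le_sum fun i hi => hstep i (Finset.mem_range.mp hi))) htail
      _ = t n * (L * (c0 / n)) + (c0 / n) * B := by rw [← Finset.sum_mul, htel]
      _ ≤ 1 * (L * (c0 / n)) + (c0 / n) * B := by
          refine add_le_add (mul_le_mul_of_nonneg_right htn (by positivity)) le_rfl
      _ = (c0 / n) * (M1 * M2 / b ^ 2 + M3 * M4 / b + M1 * M4 / b) := by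
          rw [hLdef, hBdef]; ring
  refine ⟨part1, ?_⟩
  -- Part 2
  intro s hs
  have hYint : ∀ i ∈ Finset.Icc 1 n, Integrable (fun ω => Y i ω) P := by
    intro i hi
    have : (fun ω => Y i ω) = fun ω => μ (t i) + e i ω := by funext ω; exact hY i ω
    rw [this]
    exact (integrable_const _).add (hint i hi)
  have hEY : ∀ i ∈ Finset.Icc 1 n, (∫ ω, Y i ω ∂P) = μ (t i) := by
    intro i hi
    have : (fun ω => Y i ω) = fun ω => μ (t i) + e i ω := by funext ω; exact hY i ω
    rw [this, integral_add (integrable_const _) (hint i hi), integral_const, hmean i hi]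
    simp
  have hc : ∀ i ∈ Finset.Icc 1 n,
      Integrable (fun ω => (t i - t (i - 1)) * (1 / b) * K ((s - t i) / b) * Y i ω) P := by
    intro i hi
    have := (hYint i hi).const_mul ((t i - t (i - 1)) * (1 / b) * K ((s - t i) / b))
    simpa [mul_assoc] using this
  have hEpc : (∫ ω, pcEst n t b K (fun i => Y i ω) s ∂P)
      = ∑ i ∈ Finset.Icc 1 n, (t i - t (i - 1)) * (1 / b) * K ((s - t i) / b) * μ (t i) := by
    simp only [pcEst]
    rw [integral_finset_sum _ hc]
    refine Finset.sum_congr rfl fun i hi => ?_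
    rw [show (fun ω => (t i - t (i - 1)) * (1 / b) * K ((s - t i) / b) * Y i ω)
        = fun ω => ((t i - t (i - 1)) * (1 / b) * K ((s - t i) / b)) * Y i ω from rfl,
      integral_const_mul, hEY i hi]
  rw [hEpc, abs_sub_comm]
  exact part1 s hs
end
end

section
/- Let t_0 := 0 ≤ t_1 < … < t_n ≤ 1 satisfy max_{1≤i≤n}(t_i − t_{i−1}) ≤ c_0/n and 1 − t_n ≤ c_0/n for a constant c_0 ≥ 1, let μ: [0,1] → ℝ be continuously differentiable, let K: ℝ → ℝ be twice continuously differentiable and supported in [−1,1], and let b > 0. Then for every t ∈ [0,1], | ∫_0^1 μ(s) (1/b²) K′((t − s)/b) ds − Σ_{i=1}^n (t_i − t_{i−1}) μ(t_i) (1/b²) K′((t − t_i)/b) | ≤ (c_0/n) · ( ‖μ‖_∞ ‖K″‖_∞ / b³ + ‖μ′‖_∞ ‖K′‖_∞ / b² + ‖μ‖_∞ ‖K′‖_∞ / b² ), where ‖·‖_∞ denotes the supremum norm (of μ and μ′ over [0,1], of K′ and K″ over ℝ). Consequently, in the regression model Y_i = μ(t_i) + ε_i with independent mean-zero errors, E[μ̂_n′(t)]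 = ∫_0^1 μ(s)(1/b²)K′((t−s)/b) ds + O(1/(n b³)) uniformly in t ∈ [0,1], where μ̂_n′ is the derivative of the Priestley–Chao estimator μ̂_n(t) = Σ_{i=1}^n (t_i − t_{i−1})(1/b)K((t − t_i)/b)Y_i. -/
open MeasureTheory ProbabilityTheory Filter

noncomputable section

lemma aux_deriv_zero_outside (g : ℝ → ℝ) (h0 : ∀ u, u ∉ Set.Icc (-1 : ℝ) 1 → g u = 0) :
    ∀ u, u ∉ Set.Icc (-1 : ℝ) 1 → deriv g u = 0 := by
  intro u hu
  have hopen : IsOpen (Set.Icc (-1 : ℝ) 1)ᶜ := isClosed_Icc.isOpen_compl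
  have heq : g =ᶠ[nhds u] (fun _ => (0 : ℝ)) := by
    filter_upwards [hopen.mem_nhds hu] with v hv
    exact h0 v hv
  rw [heq.deriv_eq]
  simp

lemma aux_sup_bound (g : ℝ → ℝ) (hg : Continuous g)
    (h0 : ∀ u, u ∉ Set.Icc (-1 : ℝ) 1 → g u = 0) :
    ∀ u, |g u| ≤ ⨆ v : ℝ, |g v| := by
  obtain ⟨C, hC⟩ := (isCompact_Icc (a := (-1 : ℝ)) (b := 1)).exists_bound_of_continuousOn
    hg.continuousOn
  have hb : ∀ u, |g u| ≤ max C 0 := by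
    intro u
    by_cases hu : u ∈ Set.Icc (-1 : ℝ) 1
    · exact le_max_of_le_left (hC u hu)
    · simp [h0 u hu]
  intro u
  exact le_ciSup ⟨max C 0, by rintro x ⟨v, rfl⟩; exact hb v⟩ u

lemma aux_sup_bound_Icc (g : ℝ → ℝ) (hg : ContinuousOn g (Set.Icc 0 1)) :
    ∀ u : (Set.Icc (0 : ℝ) 1 : Set ℝ), |g u| ≤ ⨆ v : (Set.Icc (0 : ℝ) 1 : Set ℝ), |g v| := by
  obtain ⟨C, hC⟩ := (isCompact_Icc (a := (0 : ℝ)) (b := 1)).exists_bound_of_continuousOn hg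
  intro u
  exact le_ciSup ⟨C, by rintro x ⟨v, rfl⟩; exact hC v v.2⟩ u

lemma aux_part1
    (n : ℕ) (hn : 1 ≤ n) (c0 : ℝ) (hc0 : 1 ≤ c0)
    (t : ℕ → ℝ) (ht0 : t 0 = 0) (ht1 : 0 ≤ t 1) (htn : t n ≤ 1)
    (hmono : ∀ i, 1 ≤ i → i < n → t i < t (i + 1))
    (hgap : ∀ i, 1 ≤ i → i ≤ n → t i - t (i - 1) ≤ c0 / n)
    (hlast : 1 - t n ≤ c0 / n)
    (μ : ℝ → ℝ) (hμ : ContDiffOn ℝ 1 μ (Set.Icc 0 1))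
    (K : ℝ → ℝ) (hK : ContDiff ℝ 2 K)
    (hKsupp : ∀ u, u ∉ Set.Icc (-1 : ℝ) 1 → K u = 0)
    (b : ℝ) (hb : 0 < b) :
    ∀ s ∈ Set.Icc (0 : ℝ) 1,
      |(∫ u in (0 : ℝ)..1, μ u * (1 / b ^ 2) * deriv K ((s - u) / b))
        - ∑ i ∈ Finset.Icc 1 n,
            (t i - t (i - 1)) * (1 / b ^ 2) * deriv K ((s - t i) / b) * μ (t i)|
      ≤ (c0 / n) *
        ((⨆ u : (Set.Icc (0 : ℝ) 1 : Set ℝ), |μ u|) * (⨆ u : ℝ, |deriv (deriv K) u|) / b ^ 3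
          + (⨆ u : (Set.Icc (0 : ℝ) 1 : Set ℝ), |derivWithin μ (Set.Icc 0 1) u|)
              * (⨆ u : ℝ, |deriv K u|) / b ^ 2
          + (⨆ u : (Set.Icc (0 : ℝ) 1 : Set ℝ), |μ u|) * (⨆ u : ℝ, |deriv K u|) / b ^ 2) := by
  intro s hs
  -- abbreviations
  set M0 : ℝ := ⨆ u : (Set.Icc (0 : ℝ) 1 : Set ℝ), |μ u| with hM0def
  set M1 : ℝ := ⨆ u : (Set.Icc (0 : ℝ) 1 : Set ℝ), |derivWithin μ (Set.Icc 0 1) u| with hM1def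
  set N1 : ℝ := ⨆ u : ℝ, |deriv K u| with hN1def
  set N2 : ℝ := ⨆ u : ℝ, |deriv (deriv K) u| with hN2def
  have hK' : ContDiff ℝ 1 (deriv K) := by
    have h2 : ContDiff ℝ ((1 : ℕ) + 1) K := by exact_mod_cast hK
    exact (contDiff_succ_iff_deriv.mp h2).2.2
  have hKd_cont : Continuous (deriv K) := hK'.continuous
  have hKdd_cont : Continuous (deriv (deriv K)) := hK'.continuous_deriv le_rfl
  have hKd0 : ∀ u, u ∉ Set.Icc (-1 : ℝ) 1 → deriv K u = 0 := aux_deriv_zero_outside K hKsupp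
  have hKdd0 : ∀ u, u ∉ Set.Icc (-1 : ℝ) 1 → deriv (deriv K) u = 0 :=
    aux_deriv_zero_outside (deriv K) hKd0
  have hN1 : ∀ u : ℝ, |deriv K u| ≤ N1 := aux_sup_bound _ hKd_cont hKd0
  have hN2 : ∀ u : ℝ, |deriv (deriv K) u| ≤ N2 := aux_sup_bound _ hKdd_cont hKdd0
  have hM0 : ∀ u ∈ Set.Icc (0 : ℝ) 1, |μ u| ≤ M0 := fun u hu =>
    aux_sup_bound_Icc μ hμ.continuousOn ⟨u, hu⟩
  have hM1 : ∀ u ∈ Set.Icc (0 : ℝ) 1, |derivWithin μ (Set.Icc 0 1) u| ≤ M1 := fun u hu =>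
    aux_sup_bound_Icc _ (hμ.continuousOn_derivWithin (uniqueDiffOn_Icc one_pos) le_rfl) ⟨u, hu⟩
  have hM0nn : 0 ≤ M0 := (abs_nonneg _).trans (hM0 0 ⟨le_rfl, zero_le_one⟩)
  have hM1nn : 0 ≤ M1 := (abs_nonneg _).trans (hM1 0 ⟨le_rfl, zero_le_one⟩)
  have hN1nn : 0 ≤ N1 := (abs_nonneg _).trans (hN1 0)
  have hN2nn : 0 ≤ N2 := (abs_nonneg _).trans (hN2 0)
  have hnpos : (0 : ℝ) < n := by exact_mod_cast hn
  have hc0n : 0 ≤ c0 / n := div_nonneg (le_trans zero_le_one hc0) hnpos.le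
  -- monotonicity of the grid
  have hstep : ∀ i, i < n → t i ≤ t (i + 1) := by
    intro i hi
    rcases Nat.eq_zero_or_pos i with h | h
    · subst h; rw [ht0]; exact ht1
    · exact (hmono i h hi).le
  have hmono2 : ∀ i j, i ≤ j → j ≤ n → t i ≤ t j := by
    intro i j hij hjn
    induction j, hij using Nat.le_induction with
    | base => exact le_rfl
    | succ k hk ih =>
      exact (ih (by omega)).trans (hstep k (by omega))
  have hti : ∀ i, i ≤ n → t i ∈ Set.Icc (0 : ℝ) 1 := by
    intro i hi
    constructor
    · rw [← ht0]; exact hmono2 0 i (Nat.zero_le _) hi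
    · exact (hmono2 i n hi le_rfl).trans htn
  -- the function and its derivative
  set f : ℝ → ℝ := fun u => μ u * ((1 / b ^ 2) * deriv K ((s - u) / b)) with hfdef
  set F : ℝ → ℝ := fun u =>
    derivWithin μ (Set.Icc 0 1) u * ((1 / b ^ 2) * deriv K ((s - u) / b))
      + μ u * ((1 / b ^ 2) * (deriv (deriv K) ((s - u) / b) * (-1 / b))) with hFdef
  have hF : ∀ u ∈ Set.Icc (0 : ℝ) 1, HasDerivWithinAt f (F u) (Set.Icc 0 1) u := by
    intro u hu
    have h1 : HasDerivWithinAt μ (derivWithin μ (Set.Icc 0 1) u) (Set.Icc 0 1) u :=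
      (hμ.differentiableOn one_ne_zero u hu).hasDerivWithinAt
    have hin : HasDerivAt (fun v : ℝ => (s - v) / b) (-1 / b) u :=
      (((hasDerivAt_id u).const_sub s).div_const b)
    have hout : HasDerivAt (deriv K) (deriv (deriv K) ((s - u) / b)) ((s - u) / b) :=
      (hK'.differentiable one_ne_zero _).hasDerivAt
    have h2 : HasDerivAt (fun v : ℝ => deriv K ((s - v) / b))
        (deriv (deriv K) ((s - u) / b) * (-1 / b)) u := by have := hout.comp u hin; exact this
    have h3 : HasDerivAt (fun v : ℝ => (1 / b ^ 2) * deriv K ((s - v) / b))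
        ((1 / b ^ 2) * (deriv (deriv K) ((s - u) / b) * (-1 / b))) u := h2.const_mul _
    exact h1.mul h3.hasDerivWithinAt
  set L : ℝ := M0 * N2 / b ^ 3 + M1 * N1 / b ^ 2 with hLdef
  have hLnn : 0 ≤ L := by positivity
  have hFb : ∀ u ∈ Set.Icc (0 : ℝ) 1, |F u| ≤ L := by
    intro u hu
    have hb2 : |(1 / b ^ 2 : ℝ)| = 1 / b ^ 2 := abs_of_pos (by positivity)
    have hbinv : |(-1 / b : ℝ)| = 1 / b := by
      rw [abs_div, abs_neg, abs_one, abs_of_pos hb]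
    have hA : |derivWithin μ (Set.Icc 0 1) u * ((1 / b ^ 2) * deriv K ((s - u) / b))|
        ≤ M1 * ((1 / b ^ 2) * N1) := by
      rw [abs_mul, abs_mul, hb2]
      gcongr
      · exact hM1 u hu
      · exact hN1 _
    have hB : |μ u * ((1 / b ^ 2) * (deriv (deriv K) ((s - u) / b) * (-1 / b)))|
        ≤ M0 * ((1 / b ^ 2) * (N2 * (1 / b))) := by
      rw [abs_mul, abs_mul, abs_mul, hb2, hbinv]
      gcongr
      · exact hM0 u hu
      · exact hN2 _
    calc |F u| ≤ _ + _ := abs_add_le _ _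
      _ ≤ M1 * ((1 / b ^ 2) * N1) + M0 * ((1 / b ^ 2) * (N2 * (1 / b))) := add_le_add hA hB
      _ = L := by rw [hLdef]; ring
  have hlip : ∀ x ∈ Set.Icc (0 : ℝ) 1, ∀ y ∈ Set.Icc (0 : ℝ) 1, |f y - f x| ≤ L * |y - x| := by
    intro x hx y hy
    have := Convex.norm_image_sub_le_of_norm_hasDerivWithin_le hF
      (fun z hz => by rw [Real.norm_eq_abs]; exact hFb z hz) (convex_Icc 0 1) hx hy
    simpa [Real.norm_eq_abs] using this
  have hfc : ContinuousOn f (Set.Icc 0 1) := by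
    have hcin : Continuous fun u : ℝ => (s - u) / b :=
      (continuous_const.sub continuous_id).div_const b
    exact hμ.continuousOn.mul ((continuous_const.mul (hKd_cont.comp hcin)).continuousOn)
  have hint_f : ∀ a c : ℝ, a ∈ Set.Icc (0 : ℝ) 1 → c ∈ Set.Icc (0 : ℝ) 1 →
      IntervalIntegrable f volume a c := by
    intro a c ha hc
    apply (hfc.mono _).intervalIntegrable
    rw [show Set.Icc (0:ℝ) 1 = Set.uIcc 0 1 from (Set.uIcc_of_le zero_le_one).symm] at ha hc ⊢
    exact Set.uIcc_subset_uIcc ha hc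
  -- per-interval bound
  have hinterval : ∀ i ∈ Finset.Icc 1 n,
      |(∫ u in t (i - 1)..t i, f u) - (t i - t (i - 1)) * f (t i)|
        ≤ L * (c0 / n) * (t i - t (i - 1)) := by
    intro i hi
    obtain ⟨hi1, hin⟩ := Finset.mem_Icc.mp hi
    have ha : t (i - 1) ∈ Set.Icc (0 : ℝ) 1 := hti _ (le_trans (Nat.sub_le _ _) hin)
    have hc : t i ∈ Set.Icc (0 : ℝ) 1 := hti _ hin
    have hac : t (i - 1) ≤ t i := hmono2 (i - 1) i (Nat.sub_le _ _) hin
    have hΔ : t i - t (i - 1) ≤ c0 / n := hgap i hi1 hin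
    have hE : (∫ u in t (i - 1)..t i, f u) - (t i - t (i - 1)) * f (t i)
        = ∫ u in t (i - 1)..t i, (f u - f (t i)) := by
      rw [intervalIntegral.integral_sub (hint_f _ _ ha hc) intervalIntegrable_const,
        intervalIntegral.integral_const, smul_eq_mul]
    rw [hE]
    have hbnd : ∀ x ∈ Set.uIoc (t (i - 1)) (t i), ‖f x - f (t i)‖ ≤ L * (c0 / n) := by
      intro x hx
      rw [Set.uIoc_of_le hac] at hx
      have hx' : x ∈ Set.Icc (0 : ℝ) 1 := ⟨ha.1.trans hx.1.le, hx.2.trans hc.2⟩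
      rw [Real.norm_eq_abs]
      calc |f x - f (t i)| ≤ L * |x - t i| := hlip _ hc _ hx'
        _ ≤ L * (c0 / n) := by
            apply mul_le_mul_of_nonneg_left _ hLnn
            rw [abs_sub_comm, abs_of_nonneg (by linarith [hx.2])]
            linarith [hx.1]
    calc |∫ u in t (i - 1)..t i, (f u - f (t i))|
        ≤ L * (c0 / n) * |t i - t (i - 1)| := by
          simpa [Real.norm_eq_abs] using
            intervalIntegral.norm_integral_le_of_norm_le_const hbnd
      _ = L * (c0 / n) * (t i - t (i - 1)) := by rw [abs_of_nonneg (by linarith)]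
  -- reindexing
  have hre : ∀ G : ℕ → ℝ, ∑ i ∈ Finset.Icc 1 n, G i = ∑ k ∈ Finset.range n, G (k + 1) := by
    intro G
    have himg : Finset.Icc 1 n = Finset.image (· + 1) (Finset.range n) := by
      ext x
      simp only [Finset.mem_Icc, Finset.mem_image, Finset.mem_range]
      constructor
      · rintro ⟨h1, h2⟩; exact ⟨x - 1, by omega, by omega⟩
      · rintro ⟨a, ha, rfl⟩; omega
    rw [himg, Finset.sum_image (by intro x _ y _ h; simp only at h; omega)]
  -- telescoping of the integral
  have hsum_int : (∫ u in (0 : ℝ)..t n, f u)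
      = ∑ i ∈ Finset.Icc 1 n, ∫ u in t (i - 1)..t i, f u := by
    rw [hre fun i => ∫ u in t (i - 1)..t i, f u]
    have := intervalIntegral.sum_integral_adjacent_intervals (a := t) (n := n) (f := f)
      (μ := volume) (fun k hk => hint_f _ _ (hti _ hk.le) (hti _ hk))
    rw [← ht0]
    rw [← this]
    refine Finset.sum_congr rfl fun k _ => ?_
    simp
  have hsum_delta : ∑ i ∈ Finset.Icc 1 n, (t i - t (i - 1)) = t n := by
    rw [hre fun i => t i - t (i - 1)]
    have : ∑ k ∈ Finset.range n, (t (k + 1) - t (k + 1 - 1)) = ∑ k ∈ Finset.range n, (t (k + 1) - t k) := by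
      refine Finset.sum_congr rfl fun k _ => by simp
    rw [this, Finset.sum_range_sub, ht0, sub_zero]
  -- splitting the integral
  have hsplit : (∫ u in (0 : ℝ)..1, f u)
      = (∫ u in (0 : ℝ)..t n, f u) + ∫ u in t n..1, f u :=
    (intervalIntegral.integral_add_adjacent_intervals
      (hint_f 0 (t n) ⟨le_rfl, zero_le_one⟩ (hti n le_rfl))
      (hint_f (t n) 1 (hti n le_rfl) ⟨zero_le_one, le_rfl⟩)).symm
  -- tail bound
  have htail : |∫ u in t n..1, f u| ≤ (M0 * N1 / b ^ 2) * (c0 / n) := by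
    have h0tn : 0 ≤ t n := (hti n le_rfl).1
    have hbnd : ∀ x ∈ Set.uIoc (t n) 1, ‖f x‖ ≤ M0 * N1 / b ^ 2 := by
      intro x hx
      rw [Set.uIoc_of_le htn] at hx
      have hx' : x ∈ Set.Icc (0 : ℝ) 1 := ⟨h0tn.trans hx.1.le, hx.2⟩
      rw [Real.norm_eq_abs, hfdef]
      have hb2 : |(1 / b ^ 2 : ℝ)| = 1 / b ^ 2 := abs_of_pos (by positivity)
      calc |μ x * (1 / b ^ 2 * deriv K ((s - x) / b))|
          ≤ M0 * (1 / b ^ 2 * N1) := by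
            rw [abs_mul, abs_mul, hb2]
            gcongr
            · exact hM0 x hx'
            · exact hN1 _
        _ = M0 * N1 / b ^ 2 := by ring
    calc |∫ u in t n..1, f u| ≤ (M0 * N1 / b ^ 2) * |1 - t n| := by
          simpa [Real.norm_eq_abs] using
            intervalIntegral.norm_integral_le_of_norm_le_const hbnd
      _ ≤ (M0 * N1 / b ^ 2) * (c0 / n) := by
          apply mul_le_mul_of_nonneg_left _ (by positivity)
          rw [abs_of_nonneg (by linarith)]
          exact hlast
  -- rewrite the target as f-expressions
  have hint_eq : (∫ u in (0 : ℝ)..1, μ u * (1 / b ^ 2) * deriv K ((s - u) / b))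
      = ∫ u in (0 : ℝ)..1, f u := by
    refine intervalIntegral.integral_congr fun u _ => ?_
    rw [hfdef]; ring
  have hsum_eq : (∑ i ∈ Finset.Icc 1 n,
        (t i - t (i - 1)) * (1 / b ^ 2) * deriv K ((s - t i) / b) * μ (t i))
      = ∑ i ∈ Finset.Icc 1 n, (t i - t (i - 1)) * f (t i) := by
    refine Finset.sum_congr rfl fun i _ => ?_
    rw [hfdef]; ring
  rw [hint_eq, hsum_eq]
  -- main estimate
  have hmain : (∫ u in (0 : ℝ)..1, f u) - ∑ i ∈ Finset.Icc 1 n, (t i - t (i - 1)) * f (t i)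
      = (∑ i ∈ Finset.Icc 1 n,
          ((∫ u in t (i - 1)..t i, f u) - (t i - t (i - 1)) * f (t i)))
        + ∫ u in t n..1, f u := by
    rw [hsplit, hsum_int, Finset.sum_sub_distrib]
    ring
  rw [hmain]
  have hsum_bound : |∑ i ∈ Finset.Icc 1 n,
      ((∫ u in t (i - 1)..t i, f u) - (t i - t (i - 1)) * f (t i))|
      ≤ L * (c0 / n) := by
    calc |∑ i ∈ Finset.Icc 1 n, ((∫ u in t (i - 1)..t i, f u) - (t i - t (i - 1)) * f (t i))|
        ≤ ∑ i ∈ Finset.Icc 1 n, |(∫ u in t (i - 1)..t i, f u) - (t i - t (i - 1)) * f (t i)| :=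
          Finset.abs_sum_le_sum_abs _ _
      _ ≤ ∑ i ∈ Finset.Icc 1 n, L * (c0 / n) * (t i - t (i - 1)) :=
          Finset.sum_le_sum hinterval
      _ = L * (c0 / n) * t n := by rw [← Finset.mul_sum, hsum_delta]
      _ ≤ L * (c0 / n) * 1 := by
          apply mul_le_mul_of_nonneg_left htn (by positivity)
      _ = L * (c0 / n) := by ring
  calc |(∑ i ∈ Finset.Icc 1 n,
          ((∫ u in t (i - 1)..t i, f u) - (t i - t (i - 1)) * f (t i)))
        + ∫ u in t n..1, f u|
      ≤ L * (c0 / n) + (M0 * N1 / b ^ 2) * (c0 / n) :=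
        (abs_add_le _ _).trans (add_le_add hsum_bound htail)
    _ = (c0 / n) * (M0 * N2 / b ^ 3 + M1 * N1 / b ^ 2 + M0 * N1 / b ^ 2) := by
        rw [hLdef]; ring


theorem statement8
    {Ω : Type*} [MeasurableSpace Ω] (P : Measure Ω) [IsProbabilityMeasure P]
    (n : ℕ) (hn : 1 ≤ n) (c0 : ℝ) (hc0 : 1 ≤ c0)
    (t : ℕ → ℝ) (ht0 : t 0 = 0) (ht1 : 0 ≤ t 1) (htn : t n ≤ 1)
    (hmono : ∀ i, 1 ≤ i → i < n → t i < t (i + 1))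
    (hgap : ∀ i, 1 ≤ i → i ≤ n → t i - t (i - 1) ≤ c0 / n)
    (hlast : 1 - t n ≤ c0 / n)
    (μ : ℝ → ℝ) (hμ : ContDiffOn ℝ 1 μ (Set.Icc 0 1))
    (K : ℝ → ℝ) (hK : ContDiff ℝ 2 K)
    (hKsupp : ∀ u, u ∉ Set.Icc (-1 : ℝ) 1 → K u = 0)
    (b : ℝ) (hb : 0 < b)
    (e : ℕ → Ω → ℝ) (hmeas : ∀ i, Measurable (e i))
    (hindep : iIndepFun
      (fun i : (Finset.Icc 1 n : Finset ℕ) => e i) P)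
    (hint : ∀ i ∈ Finset.Icc 1 n, Integrable (e i) P)
    (hmean : ∀ i ∈ Finset.Icc 1 n, (∫ ω, e i ω ∂P) = 0)
    (Y : ℕ → Ω → ℝ) (hY : ∀ i ω, Y i ω = μ (t i) + e i ω) :
    (∀ s ∈ Set.Icc (0 : ℝ) 1,
      |(∫ u in (0 : ℝ)..1, μ u * (1 / b ^ 2) * deriv K ((s - u) / b))
        - ∑ i ∈ Finset.Icc 1 n,
            (t i - t (i - 1)) * (1 / b ^ 2) * deriv K ((s - t i) / b) * μ (t i)|
      ≤ (c0 / n) *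
        ((⨆ u : (Set.Icc (0 : ℝ) 1 : Set ℝ), |μ u|) * (⨆ u : ℝ, |deriv (deriv K) u|) / b ^ 3
          + (⨆ u : (Set.Icc (0 : ℝ) 1 : Set ℝ), |derivWithin μ (Set.Icc 0 1) u|)
              * (⨆ u : ℝ, |deriv K u|) / b ^ 2
          + (⨆ u : (Set.Icc (0 : ℝ) 1 : Set ℝ), |μ u|) * (⨆ u : ℝ, |deriv K u|) / b ^ 2))
    ∧
    (∀ s ∈ Set.Icc (0 : ℝ) 1,
      |(∫ ω, deriv (pcEst n t b K (fun i => Y i ω)) s ∂P)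
        - ∫ u in (0 : ℝ)..1, μ u * (1 / b ^ 2) * deriv K ((s - u) / b)|
      ≤ (c0 / n) *
        ((⨆ u : (Set.Icc (0 : ℝ) 1 : Set ℝ), |μ u|) * (⨆ u : ℝ, |deriv (deriv K) u|) / b ^ 3
          + (⨆ u : (Set.Icc (0 : ℝ) 1 : Set ℝ), |derivWithin μ (Set.Icc 0 1) u|)
              * (⨆ u : ℝ, |deriv K u|) / b ^ 2
          + (⨆ u : (Set.Icc (0 : ℝ) 1 : Set ℝ), |μ u|) * (⨆ u : ℝ, |deriv K u|) / b ^ 2)) := by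
  constructor
  · exact aux_part1 n hn c0 hc0 t ht0 ht1 htn hmono hgap hlast μ hμ K hK hKsupp b hb
  · intro s hs
    -- compute the expected derivative
    have hKdiff : Differentiable ℝ K := hK.differentiable (by norm_num)
    have hder : ∀ ω : Ω, HasDerivAt (pcEst n t b K (fun i => Y i ω))
        (∑ i ∈ Finset.Icc 1 n,
          (t i - t (i - 1)) * (1 / b) * (deriv K ((s - t i) / b) * (1 / b)) * Y i ω) s := by
      intro ω
      have : ∀ i ∈ Finset.Icc 1 n,
          HasDerivAt (fun v : ℝ => (t i - t (i - 1)) * (1 / b) * K ((v - t i) / b) * Y i ω)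
            ((t i - t (i - 1)) * (1 / b) * (deriv K ((s - t i) / b) * (1 / b)) * Y i ω) s := by
        intro i _
        have hin : HasDerivAt (fun v : ℝ => (v - t i) / b) (1 / b) s := by
          simpa using ((hasDerivAt_id s).sub_const (t i)).div_const b
        have hout : HasDerivAt K (deriv K ((s - t i) / b)) ((s - t i) / b) :=
          (hKdiff _).hasDerivAt
        exact (((hout.comp s hin).const_mul ((t i - t (i - 1)) * (1 / b))).mul_const (Y i ω))
      exact HasDerivAt.fun_sum this
    have hderiv_eq : ∀ ω : Ω, deriv (pcEst n t b K (fun i => Y i ω)) s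
        = ∑ i ∈ Finset.Icc 1 n,
            (t i - t (i - 1)) * (1 / b) * (deriv K ((s - t i) / b) * (1 / b)) * Y i ω :=
      fun ω => (hder ω).deriv
    have hterm_int : ∀ i ∈ Finset.Icc 1 n,
        Integrable (fun ω => (t i - t (i - 1)) * (1 / b) * (deriv K ((s - t i) / b) * (1 / b))
          * Y i ω) P := by
      intro i hi
      have : (fun ω => (t i - t (i - 1)) * (1 / b) * (deriv K ((s - t i) / b) * (1 / b)) * Y i ω)
          = fun ω => ((t i - t (i - 1)) * (1 / b) * (deriv K ((s - t i) / b) * (1 / b)))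
            * (μ (t i) + e i ω) := by
        funext ω; rw [hY]
      rw [this]
      exact ((integrable_const _).add (hint i hi)).const_mul _
    have hterm_val : ∀ i ∈ Finset.Icc 1 n,
        (∫ ω, (t i - t (i - 1)) * (1 / b) * (deriv K ((s - t i) / b) * (1 / b)) * Y i ω ∂P)
          = (t i - t (i - 1)) * (1 / b) * (deriv K ((s - t i) / b) * (1 / b)) * μ (t i) := by
      intro i hi
      have hrw : (fun ω => (t i - t (i - 1)) * (1 / b) * (deriv K ((s - t i) / b) * (1 / b)) * Y i ω)
          = fun ω => ((t i - t (i - 1)) * (1 / b) * (deriv K ((s - t i) / b) * (1 / b)))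
            * (μ (t i) + e i ω) := by
        funext ω; rw [hY]
      rw [hrw, MeasureTheory.integral_const_mul,
        MeasureTheory.integral_add (integrable_const _) (hint i hi), hmean i hi,
        MeasureTheory.integral_const]
      simp
    have hEint : (∫ ω, deriv (pcEst n t b K (fun i => Y i ω)) s ∂P)
        = ∑ i ∈ Finset.Icc 1 n,
            (t i - t (i - 1)) * (1 / b^2) * deriv K ((s - t i) / b) * μ (t i) := by
      rw [MeasureTheory.integral_congr_ae (Filter.Eventually.of_forall hderiv_eq),
        MeasureTheory.integral_finset_sum _ hterm_int]
      refine Finset.sum_congr rfl fun i hi => ?_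
      rw [hterm_val i hi]
      ring
    rw [hEint, abs_sub_comm]
    exact aux_part1 n hn c0 hc0 t ht0 ht1 htn hmono hgap hlast μ hμ K hK hKsupp b hb s hs
end
end

section
/- Let t_0 := 0 ≤ t_1 < … < t_n ≤ 1 be deterministic design points satisfying the design condition with constants c_0, c_1 ≥ 1, let K: ℝ → ℝ be bounded and supported in [−1,1], and let b > 0. Then for every s ∈ ℝ, Σ_{i=1}^n (t_i − t_{i−1})² (1/b)² K((s − t_i)/b)² ≤ (c_0² c_1 ‖K‖_∞² / (n b)) · max(2, 1/(n b)), where ‖K‖_∞ = sup_u |K(u)|. In particular, in the fixed-design regression model with independent mean-zero errors ε_i of common variance σ², the random variable Z(s) = Σ_{i=1}^n (t_i − t_{i−1}) (1/b) K((s − t_i)/b) ε_i satisfies E[Z(s)²] ≤ (c_0² c_1 σ² ‖K‖_∞² / (n b)) · max(2, 1/(n b)). -/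
open MeasureTheory ProbabilityTheory Filter

noncomputable section

/-- Design condition on the deterministic design points `t 1 < … < t n` (with `t 0 = 0`). -/
def DesignCond (n : ℕ) (t : ℕ → ℝ) (c0 c1 : ℝ) : Prop :=
  1 ≤ c0 ∧ 1 ≤ c1 ∧ t 0 = 0 ∧ 0 ≤ t 1 ∧ t n ≤ 1 ∧
  (∀ i, 1 ≤ i → i < n → t i < t (i + 1)) ∧
  (∀ i, 1 ≤ i → i ≤ n → t i - t (i - 1) ≤ c0 / n) ∧
  (∀ a c : ℝ, 0 ≤ a → a ≤ c → c ≤ 1 →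
    (((Finset.Icc 1 n).filter (fun i => t i ∈ Set.Icc a c)).card : ℝ) / n
      ≤ c1 * max (c - a) (1 / n))

lemma mono_aux (n : ℕ) (t : ℕ → ℝ) (h : ∀ i, 1 ≤ i → i < n → t i < t (i + 1)) :
    ∀ i j, 1 ≤ i → i ≤ j → j ≤ n → t i ≤ t j := by
  intro i j hi
  induction j with
  | zero => intro h1 _; omega
  | succ k ih =>
    intro hik hkn
    rcases eq_or_lt_of_le hik with he | hl
    · exact le_of_eq (by rw [he])
    · have h1 : i ≤ k := by omega
      have h2 : t i ≤ t k := ih h1 (by omega)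
      have h3 : t k < t (k + 1) := h k (by omega) (by omega)
      linarith

lemma l2_mul_int {Ω : Type*} [MeasurableSpace Ω] {P : Measure Ω} {f g : Ω → ℝ}
    (hf : MemLp f 2 P) (hg : MemLp g 2 P) :
    Integrable (fun ω => f ω * g ω) P := by
  have h1 := hf.integrable_sq
  have h2 := hg.integrable_sq
  have h3 : Integrable (fun ω => (f ω ^ 2 + g ω ^ 2) / 2) P := (h1.add h2).div_const 2
  refine h3.mono' (hf.aestronglyMeasurable.mul hg.aestronglyMeasurable) ?_
  filter_upwards with ω
  rw [Real.norm_eq_abs, abs_mul]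
  nlinarith [sq_nonneg (|f ω| - |g ω|), sq_abs (f ω), sq_abs (g ω), abs_nonneg (f ω), abs_nonneg (g ω)]

theorem statement11
    {Ω : Type*} [MeasurableSpace Ω] (P : Measure Ω) [IsProbabilityMeasure P]
    (n : ℕ) (hn : 1 ≤ n) (c0 c1 : ℝ)
    (t : ℕ → ℝ) (hdesign : DesignCond n t c0 c1)
    (K : ℝ → ℝ) (hKbd : BddAbove (Set.range fun u => |K u|))
    (hKsupp : ∀ u, u ∉ Set.Icc (-1 : ℝ) 1 → K u = 0)
    (b : ℝ) (hb : 0 < b)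
    (e : ℕ → Ω → ℝ) (hmeas : ∀ i, Measurable (e i))
    (hindep : iIndepFun
      (fun i : (Finset.Icc 1 n : Finset ℕ) => e i) P)
    (hL2 : ∀ i ∈ Finset.Icc 1 n, MemLp (e i) 2 P)
    (hmean : ∀ i ∈ Finset.Icc 1 n, (∫ ω, e i ω ∂P) = 0)
    (σ2 : ℝ) (hvar : ∀ i ∈ Finset.Icc 1 n, (∫ ω, (e i ω) ^ 2 ∂P) = σ2) :
    (∀ s : ℝ,
      (∑ i ∈ Finset.Icc 1 n,
          (t i - t (i - 1)) ^ 2 * (1 / b) ^ 2 * K ((s - t i) / b) ^ 2)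
        ≤ c0 ^ 2 * c1 * (⨆ u : ℝ, |K u|) ^ 2 / (n * b) * max 2 (1 / (n * b)))
    ∧
    (∀ s : ℝ,
      (∫ ω, (∑ i ∈ Finset.Icc 1 n,
          (t i - t (i - 1)) * (1 / b) * K ((s - t i) / b) * e i ω) ^ 2 ∂P)
        ≤ c0 ^ 2 * c1 * σ2 * (⨆ u : ℝ, |K u|) ^ 2 / (n * b) * max 2 (1 / (n * b))) := by
  obtain ⟨hc0, hc1, ht0, ht1, htn, hinc, hgap, hcount⟩ := hdesign
  set M : ℝ := ⨆ u : ℝ, |K u| with hM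
  have hMnn : 0 ≤ M := le_trans (abs_nonneg (K 0)) (le_ciSup hKbd 0)
  have hMb : ∀ u, |K u| ≤ M := fun u => le_ciSup hKbd u
  have hnpos : (0 : ℝ) < n := by exact_mod_cast hn
  have hnne : (n : ℝ) ≠ 0 := ne_of_gt hnpos
  have hbne : b ≠ 0 := ne_of_gt hb
  -- t i ∈ [0,1] for i in range
  have hmem01 : ∀ i, 1 ≤ i → i ≤ n → t i ∈ Set.Icc (0 : ℝ) 1 := by
    intro i h1 h2
    constructor
    · exact le_trans ht1 (mono_aux n t hinc 1 i le_rfl h1 h2)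
    · exact le_trans (mono_aux n t hinc i n h1 h2 le_rfl) htn
  have hdiffnn : ∀ i, 1 ≤ i → i ≤ n → 0 ≤ t i - t (i - 1) := by
    intro i h1 h2
    rcases eq_or_lt_of_le h1 with he | hl
    · simp only [← he]
      simpa [ht0] using ht1
    · have : t (i - 1) ≤ t i := by
        have := mono_aux n t hinc (i - 1) i (by omega) (by omega) h2
        exact this
      linarith
  -- max identity
  have hmax : max (2 * b) (1 / (n : ℝ)) = b * max 2 (1 / (n * b)) := by
    rw [mul_max_of_nonneg _ _ (le_of_lt hb)]
    congr 1
    · ring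
    · field_simp
  have hMaxnn : (0 : ℝ) ≤ max 2 (1 / (n * b)) := le_trans (by norm_num) (le_max_left _ _)
  have hRHSnn : 0 ≤ c0 ^ 2 * c1 * M ^ 2 / (n * b) * max 2 (1 / (n * b)) := by
    apply mul_nonneg _ hMaxnn
    apply div_nonneg _ (by positivity)
    have : (0:ℝ) ≤ c1 := by linarith
    positivity
  have H1 : ∀ s : ℝ,
      (∑ i ∈ Finset.Icc 1 n,
          (t i - t (i - 1)) ^ 2 * (1 / b) ^ 2 * K ((s - t i) / b) ^ 2)
        ≤ c0 ^ 2 * c1 * M ^ 2 / (n * b) * max 2 (1 / (n * b)) := by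
    intro s
    set a : ℝ := max (s - b) 0 with haa
    set c : ℝ := min (s + b) 1 with hcc
    -- terms vanish outside [a,c]
    have hvanish : ∀ i, 1 ≤ i → i ≤ n → t i ∉ Set.Icc a c → K ((s - t i) / b) = 0 := by
      intro i h1 h2 hnot
      apply hKsupp
      intro hmem
      apply hnot
      obtain ⟨hl, hr⟩ := hmem
      have h01 := hmem01 i h1 h2
      have hub : (s - t i) / b ≤ 1 := hr
      have hlb : (-1 : ℝ) ≤ (s - t i) / b := hl
      rw [div_le_one hb] at hub
      rw [le_div_iff₀ hb] at hlb
      constructor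
      · exact max_le (by linarith) h01.1
      · exact le_min (by linarith [hlb]) h01.2
    set C : ℝ := (c0 / n) ^ 2 * (1 / b) ^ 2 * M ^ 2 with hC
    have hCnn : 0 ≤ C := by positivity
    have hterm : ∀ i ∈ Finset.Icc 1 n,
        (t i - t (i - 1)) ^ 2 * (1 / b) ^ 2 * K ((s - t i) / b) ^ 2
          ≤ if t i ∈ Set.Icc a c then C else 0 := by
      intro i hi
      rw [Finset.mem_Icc] at hi
      by_cases h : t i ∈ Set.Icc a c
      · rw [if_pos h, hC]
        have h1 : (t i - t (i - 1)) ^ 2 ≤ (c0 / n) ^ 2 := by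
          apply pow_le_pow_left₀ (hdiffnn i hi.1 hi.2) (hgap i hi.1 hi.2)
        have h2 : K ((s - t i) / b) ^ 2 ≤ M ^ 2 := by
          rw [← sq_abs]
          exact pow_le_pow_left₀ (abs_nonneg _) (hMb _) 2
        have hmul : (0:ℝ) ≤ (1 / b) ^ 2 := by positivity
        calc (t i - t (i - 1)) ^ 2 * (1 / b) ^ 2 * K ((s - t i) / b) ^ 2
            ≤ (c0 / n) ^ 2 * (1 / b) ^ 2 * K ((s - t i) / b) ^ 2 := by
              apply mul_le_mul_of_nonneg_right (mul_le_mul_of_nonneg_right h1 hmul) (sq_nonneg _)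
          _ ≤ (c0 / n) ^ 2 * (1 / b) ^ 2 * M ^ 2 := by
              apply mul_le_mul_of_nonneg_left h2 (by positivity)
      · rw [if_neg h, hvanish i hi.1 hi.2 h]
        simp
    have hsum1 := Finset.sum_le_sum hterm
    have hsum2 : (∑ i ∈ Finset.Icc 1 n, if t i ∈ Set.Icc a c then C else 0)
        = (((Finset.Icc 1 n).filter (fun i => t i ∈ Set.Icc a c)).card : ℝ) * C := by
      rw [← Finset.sum_filter, Finset.sum_const, nsmul_eq_mul]
    by_cases hac : a ≤ c
    · have hcard := hcount a c (le_max_right _ _) hac (min_le_right _ _)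
      have hcard' : (((Finset.Icc 1 n).filter (fun i => t i ∈ Set.Icc a c)).card : ℝ)
          ≤ n * (c1 * max (c - a) (1 / n)) := by
        rw [div_le_iff₀ hnpos] at hcard
        linarith [hcard]
      have hca : c - a ≤ 2 * b := by
        have h1 : s - b ≤ a := le_max_left _ _
        have h2 : c ≤ s + b := min_le_left _ _
        linarith
      have hmax2 : max (c - a) (1 / (n:ℝ)) ≤ max (2 * b) (1 / n) :=
        max_le_max hca le_rfl
      have hc1nn : (0:ℝ) ≤ c1 := by linarith
      calc (∑ i ∈ Finset.Icc 1 n,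
          (t i - t (i - 1)) ^ 2 * (1 / b) ^ 2 * K ((s - t i) / b) ^ 2)
          ≤ (((Finset.Icc 1 n).filter (fun i => t i ∈ Set.Icc a c)).card : ℝ) * C := by
            rw [← hsum2]; exact hsum1
        _ ≤ n * (c1 * max (c - a) (1 / n)) * C := mul_le_mul_of_nonneg_right hcard' hCnn
        _ ≤ n * (c1 * max (2 * b) (1 / n)) * C := by
            apply mul_le_mul_of_nonneg_right _ hCnn
            apply mul_le_mul_of_nonneg_left _ (le_of_lt hnpos)
            exact mul_le_mul_of_nonneg_left hmax2 hc1nn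
        _ = c0 ^ 2 * c1 * M ^ 2 / (n * b) * max 2 (1 / (n * b)) := by
            rw [hmax, hC]
            field_simp
    · -- degenerate: all terms vanish
      have hzero : (∑ i ∈ Finset.Icc 1 n,
          (t i - t (i - 1)) ^ 2 * (1 / b) ^ 2 * K ((s - t i) / b) ^ 2) = 0 := by
        apply Finset.sum_eq_zero
        intro i hi
        rw [Finset.mem_Icc] at hi
        have : t i ∉ Set.Icc a c := by
          intro hm
          exact hac (le_trans hm.1 hm.2)
        rw [hvanish i hi.1 hi.2 this]
        ring
      rw [hzero]
      exact hRHSnn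
  refine ⟨H1, ?_⟩
  -- Part 2
  intro s
  have h1n : 1 ∈ Finset.Icc 1 n := by simp [hn]
  have hσnn : 0 ≤ σ2 := by
    rw [← hvar 1 h1n]
    exact integral_nonneg fun ω => sq_nonneg _
  set A : ℕ → ℝ := fun i => (t i - t (i - 1)) * (1 / b) * K ((s - t i) / b) with hA
  have hInt2 : ∀ i ∈ Finset.Icc 1 n, ∀ j ∈ Finset.Icc 1 n,
      Integrable (fun ω => e i ω * e j ω) P :=
    fun i hi j hj => l2_mul_int (hL2 i hi) (hL2 j hj)
  have hindep' : ∀ i ∈ Finset.Icc 1 n, ∀ j ∈ Finset.Icc 1 n, i ≠ j →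
      IndepFun (e i) (e j) P := by
    intro i hi j hj hij
    exact hindep.indepFun (i := ⟨i, hi⟩) (j := ⟨j, hj⟩) (by simpa using hij)
  have hexp : ∀ ω, (∑ i ∈ Finset.Icc 1 n, A i * e i ω) ^ 2
      = ∑ i ∈ Finset.Icc 1 n, ∑ j ∈ Finset.Icc 1 n, A i * A j * (e i ω * e j ω) := by
    intro ω
    rw [sq, Finset.sum_mul_sum]
    exact Finset.sum_congr rfl fun i _ => Finset.sum_congr rfl fun j _ => by ring
  have hstep1 : (∫ ω, (∑ i ∈ Finset.Icc 1 n, A i * e i ω) ^ 2 ∂P)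
      = ∑ i ∈ Finset.Icc 1 n, ∑ j ∈ Finset.Icc 1 n, A i * A j * (∫ ω, e i ω * e j ω ∂P) := by
    simp_rw [hexp]
    rw [integral_finset_sum _ (fun i hi => integrable_finset_sum _
      (fun j hj => (hInt2 i hi j hj).const_mul _))]
    refine Finset.sum_congr rfl fun i hi => ?_
    rw [integral_finset_sum _ (fun j hj => (hInt2 i hi j hj).const_mul _)]
    exact Finset.sum_congr rfl fun j hj => integral_const_mul _ _
  have hinner : ∀ i ∈ Finset.Icc 1 n,
      (∑ j ∈ Finset.Icc 1 n, A i * A j * (∫ ω, e i ω * e j ω ∂P)) = A i ^ 2 * σ2 := by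
    intro i hi
    rw [Finset.sum_eq_single_of_mem i hi]
    · have : (∫ ω, e i ω * e i ω ∂P) = σ2 := by
        rw [← hvar i hi]
        congr 1
        ext ω
        ring
      rw [this]; ring
    · intro j hj hne
      have hI := hindep' i hi j hj (Ne.symm hne)
      have : (∫ ω, e i ω * e j ω ∂P) = 0 := by
        have := IndepFun.integral_mul_eq_mul_integral hI (hL2 i hi).aestronglyMeasurable (hL2 j hj).aestronglyMeasurable
        calc (∫ ω, e i ω * e j ω ∂P) = ∫ ω, (e i * e j) ω ∂P := rfl
          _ = (∫ ω, e i ω ∂P) * (∫ ω, e j ω ∂P) := this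
          _ = 0 := by rw [hmean i hi, hmean j hj]; ring
      rw [this, mul_zero]
    done
  have hfinal : (∫ ω, (∑ i ∈ Finset.Icc 1 n, A i * e i ω) ^ 2 ∂P)
      = σ2 * ∑ i ∈ Finset.Icc 1 n,
          (t i - t (i - 1)) ^ 2 * (1 / b) ^ 2 * K ((s - t i) / b) ^ 2 := by
    rw [hstep1, Finset.sum_congr rfl hinner, Finset.mul_sum]
    exact Finset.sum_congr rfl fun i _ => by rw [hA]; ring
  calc (∫ ω, (∑ i ∈ Finset.Icc 1 n,
          (t i - t (i - 1)) * (1 / b) * K ((s - t i) / b) * e i ω) ^ 2 ∂P)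
      = σ2 * ∑ i ∈ Finset.Icc 1 n,
          (t i - t (i - 1)) ^ 2 * (1 / b) ^ 2 * K ((s - t i) / b) ^ 2 := hfinal
    _ ≤ σ2 * (c0 ^ 2 * c1 * M ^ 2 / (n * b) * max 2 (1 / (n * b))) :=
        mul_le_mul_of_nonneg_left (H1 s) hσnn
    _ = c0 ^ 2 * c1 * σ2 * M ^ 2 / (n * b) * max 2 (1 / (n * b)) := by ring
end
end
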